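/- arXiv:2509.20932 — 7 statements merged into one kernel-verified Lean document; each statement's English description precedes it below -/
import Mathlib

section
/- Functoriality of approximation: if α is a morphism of selection functions from s to t over a short lens map, then α is also a morphism from T_ε(s) to T_ε(t). -/
def Tsel {X V : Type*} [MetricSpace V] (ε : ℝ) (G : (X → V) → Set X) :
    (X → V) → Set X :=
  fun k => {x | ∃ k' : X → V, (∀ y, dist (k' y) (k y) ≤ ε) ∧ x ∈ G k'}

theorem Tsel_functorial {X V X' V' : Type*} [MetricSpace V] [MetricSpace V']
    (s : (X → V) → Set X) (t : (X' → V') → Set X')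
    (α₀ : X → X') (α₁ : X × V' → V)
    (hshort : ∀ x : X, ∀ v w : V', dist (α₁ (x, v)) (α₁ (x, w)) ≤ dist v w)
    (hmor : ∀ (k : X' → V') (x : X), α₀ x ∈ t k → x ∈ s (fun z => α₁ (z, k (α₀ z))))
    (ε : ℝ) :
    ∀ (k : X' → V') (x : X),
      α₀ x ∈ Tsel ε t k → x ∈ Tsel ε s (fun z => α₁ (z, k (α₀ z))) := by
  rintro k x ⟨k', hk', hx⟩
  exact ⟨fun z => α₁ (z, k' (α₀ z)),
    fun y => le_trans (hshort y _ _) (hk' (α₀ y)), hmor k' x hx⟩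
end

section
/- Approximation is lax monoidal with respect to the Nash product: T_ε(G ⊗ H) ⊆ T_ε(G) ⊗ T_ε(H) for selection functions G and H. -/
def Nash {X X' V V' : Type*} (G : (X → V) → Set X) (H : (X' → V') → Set X') :
    (X × X' → V × V') → Set (X × X') :=
  fun f => {p | p.1 ∈ G (fun z => (f (z, p.2)).1) ∧ p.2 ∈ H (fun z' => (f (p.1, z')).2)}

theorem Tsel_lax_monoidal {X X' V V' : Type*} [MetricSpace V] [MetricSpace V']
    (G : (X → V) → Set X) (H : (X' → V') → Set X') (ε : ℝ) :
    ∀ k, Tsel ε (Nash G H) k ⊆ Nash (Tsel ε G) (Tsel ε H) k := by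
  intro k p hp
  obtain ⟨k', hk', h1, h2⟩ := hp
  constructor
  · exact ⟨fun z => (k' (z, p.2)).1, fun y =>
      le_trans (by rw [Prod.dist_eq] at *; exact le_max_left _ _) (hk' (y, p.2)), h1⟩
  · exact ⟨fun z' => (k' (p.1, z')).2, fun y =>
      le_trans (by rw [Prod.dist_eq] at *; exact le_max_right _ _) (hk' (p.1, y)), h2⟩
end

section
/- Given X, X' with decidable equality, k : X × X' → V × V', points x ∈ X, x' ∈ X', and functions g : X → V, h : X' → V' with d(g, π₀∘k(−,x')) ≤ ε and d(h, π₁∘k(x,−)) ≤ ε (sup-metrics), there exists k' : X × X' → V × V' with d(k',k) ≤ ε (sup- and max-metric), π₀∘k'(−,x') = g, and π₁∘k'(x,−) = h. -/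
theorem exists_glueing {X X' V V' : Type*} [MetricSpace V] [MetricSpace V']
    [DecidableEq X] [DecidableEq X']
    (ε : ℝ) (k : X × X' → V × V') (x : X) (x' : X')
    (g : X → V) (h : X' → V')
    (hg : ∀ z : X, dist (g z) (k (z, x')).1 ≤ ε)
    (hh : ∀ z' : X', dist (h z') (k (x, z')).2 ≤ ε) :
    ∃ k' : X × X' → V × V',
      (∀ p : X × X', dist (k' p) (k p) ≤ ε) ∧
      (∀ z : X, (k' (z, x')).1 = g z) ∧
      (∀ z' : X', (k' (x, z')).2 = h z') := by
  have hε : 0 ≤ ε := le_trans dist_nonneg (hg x)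
  refine ⟨fun p => (if p.2 = x' then g p.1 else (k p).1,
                    if p.1 = x then h p.2 else (k p).2), ?_, ?_, ?_⟩
  · rintro ⟨z, z'⟩
    rw [Prod.dist_eq]
    refine max_le ?_ ?_ <;> dsimp only
    · split
      · subst ‹z' = x'›; exact hg z
      · simp [hε]
    · split
      · subst ‹z = x›; exact hh z'
      · simp [hε]
  · intro z; simp
  · intro z'; simp
end

section
/- For X, X' with decidable equality, T_ε(G) ⊗ T_ε(H) ⊆ T_ε(G ⊗ H), hence (combined with lax monoidality) T_ε(G ⊗ H) = T_ε(G) ⊗ T_ε(H). -/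
theorem Tsel_monoidal {X X' V V' : Type*} [MetricSpace V] [MetricSpace V']
    [DecidableEq X] [DecidableEq X']
    (G : (X → V) → Set X) (H : (X' → V') → Set X') (ε : ℝ) :
    (∀ k, Nash (Tsel ε G) (Tsel ε H) k ⊆ Tsel ε (Nash G H) k) ∧
    Tsel ε (Nash G H) = Nash (Tsel ε G) (Tsel ε H) := by
  have oplax : ∀ k, Nash (Tsel ε G) (Tsel ε H) k ⊆ Tsel ε (Nash G H) k := by
    rintro k ⟨x, x'⟩ ⟨⟨k1, hk1, hx⟩, ⟨k2, hk2, hx'⟩⟩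
    have hε : (0:ℝ) ≤ ε := le_trans dist_nonneg (hk1 x)
    refine ⟨fun p => (if p.2 = x' then k1 p.1 else (k p).1,
                      if p.1 = x then k2 p.2 else (k p).2), ?_, ?_, ?_⟩
    · rintro ⟨a, b⟩
      rw [Prod.dist_eq]
      refine max_le ?_ ?_ <;> dsimp only
      · split
        · next h => subst h; exact hk1 a
        · simpa using hε
      · split
        · next h => subst h; exact hk2 b
        · simpa using hε
    · simpa using hx
    · simpa using hx'
  refine ⟨oplax, ?_⟩
  funext k
  apply Set.Subset.antisymm
  · rintro ⟨x, x'⟩ ⟨k', hk', hx, hx'⟩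
    constructor
    · exact ⟨fun z => (k' (z, x')).1, fun y => le_trans (le_max_left _ _)
        (by rw [← Prod.dist_eq]; exact hk' (y, x')), hx⟩
    · exact ⟨fun z' => (k' (x, z')).2, fun y => le_trans (le_max_right _ _)
        (by rw [← Prod.dist_eq]; exact hk' (x, y)), hx'⟩
  · exact oplax k
end

section
/- Sequential composition preserves approximation laxly for open games: if x ∈ E_{T_ε(H∘G),(σ,τ)}(k), then x ∈ E_{T_ε(H)∘T_ε(G),(σ,τ)}(k), assuming all lenses in H are short. -/
/-- Approximation of an equilibrium predicate at grade ε. -/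
def TE {Sg X Y R : Type*} [MetricSpace R] (ε : ℝ)
    (E : Sg → X → (Y → R) → Prop) : Sg → X → (Y → R) → Prop :=
  fun σ x k => ∃ k' : Y → R, (∀ y, dist (k' y) (k y) ≤ ε) ∧ E σ x k'

theorem seq_comp_lax {Sg Ω X S Y R Z T : Type*} [MetricSpace R] [MetricSpace T]
    -- the open game G : (X,S) → (Y,R)
    (Gp : Sg → X → Y) (Gc : Sg → X × R → S)
    (EG : Sg → X → (Y → R) → Prop)
    -- the open game H : (Y,R) → (Z,T)
    (Hp : Ω → Y → Z) (Hc : Ω → Y × T → R)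
    (EH : Ω → Y → (Z → T) → Prop)
    -- all lenses of H are short
    (hHshort : ∀ (τ : Ω) (y : Y) (t t' : T), dist (Hc τ (y, t)) (Hc τ (y, t')) ≤ dist t t')
    (ε : ℝ) (σ : Sg) (τ : Ω) (x : X) (k : Z → T)
    -- x is an equilibrium of T_ε(H ∘ G): the composite equilibrium predicate of H ∘ G,
    -- approximated at grade ε
    (hx : TE ε (fun (p : Sg × Ω) x k =>
            EG p.1 x (fun y => Hc p.2 (y, k (Hp p.2 y))) ∧ EH p.2 (Gp p.1 x) k)
          (σ, τ) x k) :
    -- x is an equilibrium of T_ε(H) ∘ T_ε(G)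
    TE ε EG σ x (fun y => Hc τ (y, k (Hp τ y))) ∧ TE ε EH τ (Gp σ x) k := by
  obtain ⟨k', hk', hEG, hEH⟩ := hx
  refine ⟨⟨fun y => Hc τ (y, k' (Hp τ y)), fun y => ?_, hEG⟩, ⟨k', hk', hEH⟩⟩
  exact (hHshort τ y _ _).trans (hk' _)
end

section
/- Functoriality of approximation for open games: if (f, α, β) is a morphism of open games from G to G' with α, β short lens maps, then (f, α, β) is also a morphism from T_ε(G) to T_ε(G'). -/
theorem open_game_functorial {Sg1 Sg2 X S Y R X' S' Y' R' : Type*}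
    [MetricSpace R] [MetricSpace R']
    (E : Sg1 → X → (Y → R) → Prop) (E' : Sg2 → X' → (Y' → R') → Prop)
    (f : Sg1 → Sg2)
    (α₀ : X → X') (α₁ : X × S' → S)
    (β₀ : Y → Y') (β₁ : Y × R' → R)
    (hβshort : ∀ (y : Y) (r r' : R'), dist (β₁ (y, r)) (β₁ (y, r')) ≤ dist r r')
    (hmor : ∀ (σ : Sg1) (x : X) (k : Y' → R'),
        E' (f σ) (α₀ x) k → E σ x (fun y => β₁ (y, k (β₀ y))))
    (ε : ℝ) :
    ∀ (σ : Sg1) (x : X) (k : Y' → R'),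
      TE ε E' (f σ) (α₀ x) k → TE ε E σ x (fun y => β₁ (y, k (β₀ y))) := by
  rintro σ x k ⟨k', hk', hE⟩
  exact ⟨fun y => β₁ (y, k' (β₀ y)), fun y => le_trans (hβshort y _ _) (hk' (β₀ y)),
    hmor σ x k' hE⟩
end

section
/- Distance between Nash products: if X, X' have decidable equality, d(s,s') ≤ ε and d(t,t') ≤ ε, then d(s ⊗ t, s' ⊗ t') ≤ ε. -/
open scoped ENNReal

def TselE {X V : Type*} [MetricSpace V] (ε : ℝ≥0∞) (s : (X → V) → Set X) :
    (X → V) → Set X :=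
  fun k => {x | ∃ k' : X → V, (∀ y, edist (k' y) (k y) ≤ ε) ∧ x ∈ s k'}

noncomputable def gdist {X V : Type*} [MetricSpace V]
    (s s' : (X → V) → Set X) : ℝ≥0∞ :=
  sInf {ε | (∀ k, s k ⊆ TselE ε s' k) ∧ (∀ k, s' k ⊆ TselE ε s k)}

lemma TselE_mono {Y W : Type*} [MetricSpace W] (a b : ℝ≥0∞) (u : (Y → W) → Set Y)
    (hab : a ≤ b) (k : Y → W) : TselE a u k ⊆ TselE b u k := by
  rintro x ⟨k', hk', hx⟩
  exact ⟨k', fun y => le_trans (hk' y) hab, hx⟩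

lemma nash_sub {X X' V V' : Type*} [MetricSpace V] [MetricSpace V']
    [DecidableEq X] [DecidableEq X']
    (s s' : (X → V) → Set X) (t t' : (X' → V') → Set X') (δ : ℝ≥0∞)
    (hs : ∀ k, s k ⊆ TselE δ s' k) (ht : ∀ k, t k ⊆ TselE δ t' k) :
    ∀ f, Nash s t f ⊆ TselE δ (Nash s' t') f := by
  intro f p hp
  obtain ⟨h1, h2⟩ := hp
  obtain ⟨k₁, hk₁, hx⟩ := hs _ h1
  obtain ⟨k₂, hk₂, hx'⟩ := ht _ h2
  refine ⟨fun q => (if q.2 = p.2 then k₁ q.1 else (f q).1,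
                    if q.1 = p.1 then k₂ q.2 else (f q).2), ?_, ?_, ?_⟩
  · intro q
    rw [Prod.edist_eq]
    apply max_le
    · dsimp only
      split_ifs with h
      · have := hk₁ q.1
        rw [← h] at this
        simpa using this
      · simp
    · dsimp only
      split_ifs with h
      · have := hk₂ q.2
        rw [← h] at this
        simpa using this
      · simp
  · simpa using hx
  · simpa using hx'

theorem gdist_nash {X X' V V' : Type*} [MetricSpace V] [MetricSpace V']
    [DecidableEq X] [DecidableEq X']
    (s s' : (X → V) → Set X) (t t' : (X' → V') → Set X') (ε : ℝ≥0∞)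
    (hs : gdist s s' ≤ ε) (ht : gdist t t' ≤ ε) :
    gdist (Nash s t) (Nash s' t') ≤ ε := by
  apply le_of_forall_gt_imp_ge_of_dense
  intro δ hδ
  obtain ⟨δ₁, hδ₁S, hδ₁⟩ := sInf_lt_iff.mp (lt_of_le_of_lt hs hδ)
  obtain ⟨δ₂, hδ₂S, hδ₂⟩ := sInf_lt_iff.mp (lt_of_le_of_lt ht hδ)
  have hs1 : ∀ k, s k ⊆ TselE δ s' k :=
    fun k => (hδ₁S.1 k).trans (TselE_mono δ₁ δ s' hδ₁.le k)
  have hs2 : ∀ k, s' k ⊆ TselE δ s k :=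
    fun k => (hδ₁S.2 k).trans (TselE_mono δ₁ δ s hδ₁.le k)
  have ht1 : ∀ k, t k ⊆ TselE δ t' k :=
    fun k => (hδ₂S.1 k).trans (TselE_mono δ₂ δ t' hδ₂.le k)
  have ht2 : ∀ k, t' k ⊆ TselE δ t k :=
    fun k => (hδ₂S.2 k).trans (TselE_mono δ₂ δ t hδ₂.le k)
  exact sInf_le ⟨nash_sub s s' t t' δ hs1 ht1, nash_sub s' s t' t δ hs2 ht2⟩
end
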